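/- Let d ≥ 1 and let φ : ℝ^d → ℝ^d be a bijective C² map whose inverse φ^{-1} is C¹, and let x, z, z^1, …, z^d ∈ ℝ^d. Then there exist vectors a, a^1, …, a^d ∈ ℝ^d, depending only on φ, x, z, z^1, …, z^d, such that for every C¹ vector field w : ℝ^d → ℝ^d one has ⟨z, (Dφ · w)(φ^{-1}(x))⟩ + Σ_{j=1}^d ⟨z^j, ∂_j( y ↦ (Dφ · w)(φ^{-1}(y)) )(x)⟩ = ⟨a, w(φ^{-1}(x))⟩ + Σ_{j=1}^d ⟨a^j, (∂_j w)(φ^{-1}(x))⟩, where (Dφ · w)(y) := Dφ(y) w(y) denotes the Jacobian matrix of φ at y applied to w(y) and ∂_j the partial derivative in the j-th coordinate direction. -/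

import Mathlib

open Matrix

lemma dot_sum {d : ℕ} (z : Fin d → ℝ) (f : Fin d → (Fin d → ℝ)) :
    z ⬝ᵥ (∑ i, f i) = ∑ i, z ⬝ᵥ f i := by
  simp only [dotProduct, Finset.sum_apply, Finset.mul_sum]
  rw [Finset.sum_comm]

lemma dot_rep {d : ℕ} (z v : Fin d → ℝ) (L : (Fin d → ℝ) →L[ℝ] (Fin d → ℝ)) :
    z ⬝ᵥ L v = ∑ i, (z ⬝ᵥ L (Pi.single i 1)) * v i := by
  have hv : v = ∑ i, v i • (Pi.single i 1 : Fin d → ℝ) := by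
    funext k
    simp [Finset.sum_apply, Pi.single_apply]
  conv_lhs => rw [hv]
  rw [map_sum, dot_sum]
  refine Finset.sum_congr rfl fun i _ => ?_
  rw [_root_.map_smul, dotProduct_smul, smul_eq_mul, mul_comm]

/-- the coadjoint transport `w ↦ (Dφ · w) ∘ φ⁻¹` maps a sum of zeroth and
first-order Diracs at `x` to a sum of zeroth and first-order Diracs at `φ⁻¹ x`: there
exist coefficients `a, a¹, …, a^d` (depending only on `φ, x, z, z¹, …, z^d`) such that
for every `C¹` vector field `w` the stated pairings agree. -/
theorem coadjoint_preserves_diracs {d : ℕ} (hd : 1 ≤ d)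
    (φ ψ : (Fin d → ℝ) → (Fin d → ℝ))
    (hbij : Function.Bijective φ)
    (hli : Function.LeftInverse ψ φ) (hri : Function.RightInverse ψ φ)
    (hφ : ContDiff ℝ 2 φ) (hψ : ContDiff ℝ 1 ψ)
    (x : Fin d → ℝ) (z : Fin d → ℝ) (z' : Fin d → (Fin d → ℝ)) :
    ∃ (a : Fin d → ℝ) (a' : Fin d → (Fin d → ℝ)),
      ∀ w : (Fin d → ℝ) → (Fin d → ℝ), ContDiff ℝ 1 w →
        z ⬝ᵥ fderiv ℝ φ (ψ x) (w (ψ x))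
          + ∑ j, z' j ⬝ᵥ fderiv ℝ (fun y => fderiv ℝ φ (ψ y) (w (ψ y))) x (Pi.single j 1)
        = a ⬝ᵥ w (ψ x)
          + ∑ j, a' j ⬝ᵥ fderiv ℝ w (ψ x) (Pi.single j 1) := by
  set p := ψ x with hp
  set A0 := fderiv ℝ φ p with hA0
  -- derivative of y ↦ fderiv φ (ψ y)
  have hDφ : ContDiff ℝ 1 (fderiv ℝ φ) := hφ.fderiv_right (by norm_num)
  have hc : DifferentiableAt ℝ (fun y => fderiv ℝ φ (ψ y)) x :=
    ((hDφ.comp hψ).differentiable one_ne_zero).differentiableAt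
  set DG := fderiv ℝ (fun y => fderiv ℝ φ (ψ y)) x with hDG
  set Dψ := fderiv ℝ ψ x with hDψ
  refine ⟨fun i => z ⬝ᵥ A0 (Pi.single i 1) + ∑ j, z' j ⬝ᵥ (DG (Pi.single j 1)) (Pi.single i 1),
    fun k i => ∑ j, (Dψ (Pi.single j 1) k) * (z' j ⬝ᵥ A0 (Pi.single i 1)), ?_⟩
  intro w hw
  have hwd : Differentiable ℝ w := hw.differentiable one_ne_zero
  have hψd : Differentiable ℝ ψ := hψ.differentiable one_ne_zero
  have hu : DifferentiableAt ℝ (fun y => w (ψ y)) x := ((hwd.comp hψd) x)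
  set Dw := fderiv ℝ w p with hDw
  have hcomp : fderiv ℝ (fun y => w (ψ y)) x = Dw.comp Dψ := by
    rw [hDw, hDψ, hp]
    exact fderiv_comp x (hwd _) (hψd x)
  have key : ∀ j, fderiv ℝ (fun y => fderiv ℝ φ (ψ y) (w (ψ y))) x (Pi.single j 1)
      = (DG (Pi.single j 1)) (w p) + A0 (Dw (Dψ (Pi.single j 1))) := by
    intro j
    rw [fderiv_clm_apply hc hu, hcomp]
    simp [add_comm]
    rw [hA0, hDG, hp]
  -- rewrite LHS
  simp only [key, dotProduct_add, Finset.sum_add_distrib]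
  rw [← add_assoc]
  congr 1
  · -- zeroth-order part
    rw [dot_rep z (w p) A0]
    have e2 : (∑ j, z' j ⬝ᵥ (DG (Pi.single j 1)) (w p))
        = ∑ i, (∑ j, z' j ⬝ᵥ (DG (Pi.single j 1)) (Pi.single i 1)) * (w p) i := by
      calc (∑ j, z' j ⬝ᵥ (DG (Pi.single j 1)) (w p))
          = ∑ j, ∑ i, (z' j ⬝ᵥ (DG (Pi.single j 1)) (Pi.single i 1)) * (w p) i :=
            Finset.sum_congr rfl fun j _ => dot_rep _ _ _
        _ = ∑ i, ∑ j, (z' j ⬝ᵥ (DG (Pi.single j 1)) (Pi.single i 1)) * (w p) i :=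
            Finset.sum_comm
        _ = _ := by simp [Finset.sum_mul]
    rw [e2, ← Finset.sum_add_distrib]
    simp only [dotProduct, ← add_mul]
  · -- first-order part
    have h2 : ∀ j, z' j ⬝ᵥ A0 (Dw (Dψ (Pi.single j 1)))
        = ∑ k, (z' j ⬝ᵥ A0 (Dw (Pi.single k 1))) * (Dψ (Pi.single j 1) k) := by
      intro j
      have := dot_rep (z' j) (Dψ (Pi.single j 1)) (A0.comp Dw)
      simpa using this
    have h3 : ∀ k, (fun i => ∑ j, Dψ (Pi.single j 1) k * (z' j ⬝ᵥ A0 (Pi.single i 1)))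
          ⬝ᵥ Dw (Pi.single k 1)
        = ∑ j, Dψ (Pi.single j 1) k * (z' j ⬝ᵥ A0 (Dw (Pi.single k 1))) := by
      intro k
      calc (fun i => ∑ j, Dψ (Pi.single j 1) k * (z' j ⬝ᵥ A0 (Pi.single i 1)))
            ⬝ᵥ Dw (Pi.single k 1)
          = ∑ i, (∑ j, Dψ (Pi.single j 1) k * (z' j ⬝ᵥ A0 (Pi.single i 1)))
              * Dw (Pi.single k 1) i := rfl
        _ = ∑ i, ∑ j, Dψ (Pi.single j 1) k * (z' j ⬝ᵥ A0 (Pi.single i 1))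
              * Dw (Pi.single k 1) i := by simp only [Finset.sum_mul]
        _ = ∑ j, ∑ i, Dψ (Pi.single j 1) k * (z' j ⬝ᵥ A0 (Pi.single i 1))
              * Dw (Pi.single k 1) i := Finset.sum_comm
        _ = ∑ j, Dψ (Pi.single j 1) k * (z' j ⬝ᵥ A0 (Dw (Pi.single k 1))) := by
            refine Finset.sum_congr rfl fun j _ => ?_
            rw [dot_rep (z' j) (Dw (Pi.single k 1)) A0, Finset.mul_sum]
            exact Finset.sum_congr rfl fun i _ => by ring
    simp only [h2, h3]
    rw [Finset.sum_comm]
    exact Finset.sum_congr rfl fun k _ => Finset.sum_congr rfl fun j _ => by ring
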